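/- Let ⟨3⟩ := {n ∈ ℕ, n ≥ 1 | ∃ x, y, z ∈ ℕ (allowing 0) with n = x² + y² + z²} be the set of positive integers expressible as a sum of three squares. Then the minimal set of ⟨3⟩ is M(⟨3⟩) = {1, 2, 3, 4, 5, 6, 8, 9, 70, 77}. -/

import Mathlib

/-- `Subseq x y` means the decimal digit string of `x` is a subsequence of that of `y`. -/
def Subseq (x y : ℕ) : Prop := (Nat.digits 10 x).Sublist (Nat.digits 10 y)

/-- The minimal set of `S`: elements of `S` containing no smaller element of `S`
as a subsequence of their decimal digits. -/
def minimalSet (S : Set ℕ) : Set ℕ := {s ∈ S | ¬ ∃ n ∈ S, n < s ∧ Subseq n s}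

lemma seven_not_sum : ¬ ∃ x y z : ℕ, 7 = x ^ 2 + y ^ 2 + z ^ 2 := by
  rintro ⟨x, y, z, h⟩
  have hx : x ≤ 2 := by nlinarith
  have hy : y ≤ 2 := by nlinarith
  have hz : z ≤ 2 := by nlinarith
  interval_cases x <;> interval_cases y <;> interval_cases z <;> omega

lemma sumsq_small {d : ℕ} (h1 : 1 ≤ d) (h9 : d ≤ 9) (h7 : d ≠ 7) :
    ∃ x y z : ℕ, d = x ^ 2 + y ^ 2 + z ^ 2 := by
  interval_cases d
  · exact ⟨0, 0, 1, by norm_num⟩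
  · exact ⟨0, 1, 1, by norm_num⟩
  · exact ⟨1, 1, 1, by norm_num⟩
  · exact ⟨0, 0, 2, by norm_num⟩
  · exact ⟨0, 1, 2, by norm_num⟩
  · exact ⟨1, 1, 2, by norm_num⟩
  · exact absurd rfl h7
  · exact ⟨0, 2, 2, by norm_num⟩
  · exact ⟨0, 0, 3, by norm_num⟩

lemma short_digits_le {a : ℕ} (ha : (Nat.digits 10 a).length ≤ 1) : a ≤ 9 := by
  have h1 : a < 10 ^ (Nat.digits 10 a).length := Nat.lt_base_pow_length_digits (by norm_num)
  have h2 : (10:ℕ) ^ (Nat.digits 10 a).length ≤ 10 ^ 1 :=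
    Nat.pow_le_pow_right (by norm_num) ha
  omega

lemma subseq_lt {a b : ℕ} (h : Subseq a b) (hne : a ≠ b) : a < b := by
  unfold Subseq at h
  have hlen := h.length_le
  rcases eq_or_lt_of_le hlen with heq | hlt
  · exact absurd (by rw [← Nat.ofDigits_digits 10 a, h.eq_of_length heq,
      Nat.ofDigits_digits]) hne
  · have hb : b ≠ 0 := by
      rintro rfl
      simp [Nat.digits_zero] at h
      exact hne (by simpa [Nat.digits_eq_nil_iff_eq_zero] using h)
    have h1 : a < 10 ^ (Nat.digits 10 a).length := Nat.lt_base_pow_length_digits (by norm_num)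
    have h2 : 10 ^ (Nat.digits 10 b).length ≤ 10 * b :=
      Nat.base_pow_length_digits_le 10 b (by norm_num) hb
    have h3 : 10 ^ ((Nat.digits 10 a).length + 1) ≤ 10 ^ (Nat.digits 10 b).length :=
      Nat.pow_le_pow_right (by norm_num) hlt
    have : 10 * (10 ^ (Nat.digits 10 a).length) ≤ 10 * b := by
      calc 10 * 10 ^ (Nat.digits 10 a).length = 10 ^ ((Nat.digits 10 a).length + 1) := by ring
      _ ≤ 10 * b := le_trans h3 h2
    omega

lemma digits70 : Nat.digits 10 70 = [0, 7] := by norm_num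
lemma digits77 : Nat.digits 10 77 = [7, 7] := by norm_num

/-- key lemma for two-digit minimality checks -/
lemma key2 {m n : ℕ} {Lm : List ℕ} (hm : Nat.digits 10 m = Lm) (hlen : Lm.length = 2)
    (hn1 : 1 ≤ n) (hsub : (Nat.digits 10 n).Sublist Lm) :
    n = m ∨ (n ≤ 9 ∧ n ∈ Lm) := by
  have hle := hsub.length_le
  rw [hlen] at hle
  rcases eq_or_lt_of_le hle with heq | hlt2
  · left
    have heq2 : Nat.digits 10 n = Lm := hsub.eq_of_length (by rw [hlen, heq])
    rw [← Nat.ofDigits_digits 10 n, heq2, ← hm, Nat.ofDigits_digits]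
  · right
    have hn9 : n ≤ 9 := short_digits_le (by omega)
    have hdig : Nat.digits 10 n = [n] := Nat.digits_of_lt 10 n (by omega) (by omega)
    rw [hdig] at hsub
    exact ⟨hn9, List.singleton_sublist.mp hsub⟩

theorem minimalSet_sumThreeSquares :
    minimalSet {n : ℕ | 1 ≤ n ∧ ∃ x y z : ℕ, n = x ^ 2 + y ^ 2 + z ^ 2} =
      {1, 2, 3, 4, 5, 6, 8, 9, 70, 77} := by
  ext s
  simp only [minimalSet, Set.mem_setOf_eq, Set.mem_insert_iff, Set.mem_singleton_iff]
  constructor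
  · rintro ⟨⟨hs1, hs3⟩, hmin⟩
    by_contra hnot
    push_neg at hnot
    obtain ⟨h1, h2, h3, h4, h5, h6, h8, h9, h70, h77⟩ := hnot
    have hs7 : s ≠ 7 := by rintro rfl; exact seven_not_sum hs3
    have hs10 : 10 ≤ s := by
      by_contra hc
      push_neg at hc
      interval_cases s <;> simp_all
    set L := Nat.digits 10 s with hL
    have hLne : L ≠ [] := Nat.digits_ne_nil_iff_ne_zero.mpr (by omega)
    have hLlen : 2 ≤ L.length := by
      by_contra hc
      push_neg at hc
      have hc' : (Nat.digits 10 s).length ≤ 1 := by rw [← hL]; omega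
      have := short_digits_le hc'
      omega
    -- all digits of s are 0 or 7
    have hdig : ∀ d ∈ L, d = 0 ∨ d = 7 := by
      intro d hd
      by_contra hd07
      push_neg at hd07
      have hd10 : d < 10 := Nat.digits_lt_base (by norm_num) hd
      have hd1 : 1 ≤ d := by omega
      refine hmin ⟨d, ⟨hd1, sumsq_small hd1 (by omega) hd07.2⟩, by omega, ?_⟩
      unfold Subseq
      rw [Nat.digits_of_lt 10 d (by omega) hd10]
      exact List.singleton_sublist.mpr hd
    -- the last digit is 7
    have hlast : L.getLast hLne = 7 := by
      have := Nat.getLast_digit_ne_zero 10 (m := s) (by omega)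
      rcases hdig _ (List.getLast_mem hLne) with h | h
      · exact absurd h this
      · exact h
    have hsplit : L = L.dropLast ++ [7] := by
      conv_lhs => rw [← List.dropLast_append_getLast hLne, hlast]
    have hdlne : L.dropLast ≠ [] := by
      have := @List.length_dropLast _ L
      intro h
      rw [h] at this
      simp at this
      omega
    by_cases h7mem : 7 ∈ L.dropLast
    · have hsub : Subseq 77 s := by
        unfold Subseq
        rw [digits77, ← hL, hsplit]
        exact (List.singleton_sublist.mpr h7mem).append (List.Sublist.refl [7])
      exact hmin ⟨77, ⟨by norm_num, 2, 3, 8, by norm_num⟩, subseq_lt hsub (Ne.symm h77), hsub⟩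
    · have h0mem : 0 ∈ L.dropLast := by
        obtain ⟨d, hd⟩ := List.exists_mem_of_ne_nil _ hdlne
        rcases hdig d (List.dropLast_sublist L |>.mem hd) with rfl | rfl
        · exact hd
        · exact absurd hd h7mem
      have hsub : Subseq 70 s := by
        unfold Subseq
        rw [digits70, ← hL, hsplit]
        exact (List.singleton_sublist.mpr h0mem).append (List.Sublist.refl [7])
      exact hmin ⟨70, ⟨by norm_num, 3, 5, 6, by norm_num⟩, subseq_lt hsub (Ne.symm h70), hsub⟩
  · intro hs
    have single : ∀ d : ℕ, 1 ≤ d → d ≤ 9 →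
        ¬ ∃ n, (1 ≤ n ∧ ∃ x y z : ℕ, n = x ^ 2 + y ^ 2 + z ^ 2) ∧ n < d ∧ Subseq n d := by
      intro d hd1 hd9
      rintro ⟨n, ⟨hn1, -⟩, hlt, hsub⟩
      unfold Subseq at hsub
      rw [Nat.digits_of_lt 10 d (by omega) (by omega)] at hsub
      rcases List.sublist_singleton.mp hsub with h | h
      · exact absurd (Nat.digits_eq_nil_iff_eq_zero.mp h) (by omega)
      · have : n = d := by rw [← Nat.ofDigits_digits 10 n, h]; simp [Nat.ofDigits]
        omega
    have min70 : ¬ ∃ n, (1 ≤ n ∧ ∃ x y z : ℕ, n = x ^ 2 + y ^ 2 + z ^ 2) ∧ n < 70 ∧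
        Subseq n 70 := by
      rintro ⟨n, ⟨hn1, hnsq⟩, hlt, hsub⟩
      unfold Subseq at hsub
      rw [digits70] at hsub
      rcases key2 digits70 rfl hn1 hsub with h | ⟨hn9, hmem⟩
      · omega
      · simp at hmem
        rcases hmem with rfl | rfl
        · omega
        · exact seven_not_sum hnsq
    have min77 : ¬ ∃ n, (1 ≤ n ∧ ∃ x y z : ℕ, n = x ^ 2 + y ^ 2 + z ^ 2) ∧ n < 77 ∧
        Subseq n 77 := by
      rintro ⟨n, ⟨hn1, hnsq⟩, hlt, hsub⟩
      unfold Subseq at hsub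
      rw [digits77] at hsub
      rcases key2 digits77 rfl hn1 hsub with h | ⟨hn9, hmem⟩
      · omega
      · simp at hmem
        subst hmem
        exact seven_not_sum hnsq
    rcases hs with rfl | rfl | rfl | rfl | rfl | rfl | rfl | rfl | rfl | rfl
    · exact ⟨⟨by norm_num, 0, 0, 1, by norm_num⟩, single 1 (by norm_num) (by norm_num)⟩
    · exact ⟨⟨by norm_num, 0, 1, 1, by norm_num⟩, single 2 (by norm_num) (by norm_num)⟩
    · exact ⟨⟨by norm_num, 1, 1, 1, by norm_num⟩, single 3 (by norm_num) (by norm_num)⟩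
    · exact ⟨⟨by norm_num, 0, 0, 2, by norm_num⟩, single 4 (by norm_num) (by norm_num)⟩
    · exact ⟨⟨by norm_num, 0, 1, 2, by norm_num⟩, single 5 (by norm_num) (by norm_num)⟩
    · exact ⟨⟨by norm_num, 1, 1, 2, by norm_num⟩, single 6 (by norm_num) (by norm_num)⟩
    · exact ⟨⟨by norm_num, 0, 2, 2, by norm_num⟩, single 8 (by norm_num) (by norm_num)⟩
    · exact ⟨⟨by norm_num, 0, 0, 3, by norm_num⟩, single 9 (by norm_num) (by norm_num)⟩
    · exact ⟨⟨by norm_num, 3, 5, 6, by norm_num⟩, min70⟩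
    · exact ⟨⟨by norm_num, 2, 3, 8, by norm_num⟩, min77⟩
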